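/- Let 1 ≤ p < ∞ and 0 < s < 1, and let u : X → ℝ be a Lipschitz function. For every k ∈ ℤ define u_k : X → [0,1] by u_k(x) = 1 if |u(x)| ≥ 2^{k+1}, u_k(x) = |u(x)|/2^k − 1 if 2^k < |u(x)| < 2^{k+1}, and u_k(x) = 0 if |u(x)| ≤ 2^k. Then there exists a constant C depending only on p (one may take C = 2^{p+2}/(1 − 2^{−p})) such that for every z ∈ X and R > 0: Σ_{k∈ℤ} 2^{kp} ∫_{B(z,R)} ∫_{B(z,R)} |u_k(x)−u_k(y)|^p / (d(x,y)^{sp} μ(B(x,d(x,y)))) dμ(y) dμ(x) ≤ C ∫_{B(z,R)} ∫_{B(z,R)} |u(x)−u(y)|^p / (d(x,y)^{sp} μ(B(x,d(x,y)))) dμ(y) dμ(x). -/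

import Mathlib

open Metric MeasureTheory Set
open scoped ENNReal NNReal

/-- The effective diameter bound: `diam E`, unless `diam E = 0`, in which case `diam X`. -/
noncomputable def diamBound {X : Type*} [PseudoEMetricSpace X] (E : Set X) : ℝ≥0∞ :=
  haveI := Classical.propDecidable
  if EMetric.diam E = 0 then EMetric.diam (Set.univ : Set X) else EMetric.diam E

/-- The fractional `(s,p)`-Gagliardo kernel `|u x - u y|^p / (d(x,y)^{sp} μ(B(x,d(x,y))))`. -/
noncomputable def fracKernel {X : Type*} [MetricSpace X] [MeasurableSpace X]
    (μ : Measure X) (s p : ℝ) (u : X → ℝ) (x y : X) : ℝ≥0∞ :=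
  ENNReal.ofReal (|u x - u y| ^ p) /
    (ENNReal.ofReal (dist x y ^ (s * p)) * μ (ball x (dist x y)))

/-- The Maz'ya-type truncation `u_k` of a function `u` at level `k ∈ ℤ`:
`u_k = 1` where `|u| ≥ 2^{k+1}`, `u_k = |u|/2^k - 1` where `2^k < |u| < 2^{k+1}`,
and `u_k = 0` where `|u| ≤ 2^k`. -/
noncomputable def truncLevel {X : Type*} (u : X → ℝ) (k : ℤ) (x : X) : ℝ :=
  if (2 : ℝ) ^ (k + 1) ≤ |u x| then 1
  else if |u x| ≤ (2 : ℝ) ^ k then 0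
  else |u x| / 2 ^ k - 1

lemma truncLevel_eq {X : Type*} (u : X → ℝ) (k : ℤ) (x : X) :
    truncLevel u k x = min 1 (max (|u x| / 2 ^ k - 1) 0) := by
  have h2k : (0:ℝ) < 2 ^ k := zpow_pos (by norm_num) k
  have hsucc : (2:ℝ) ^ (k+1) = 2 * 2 ^ k := by
    rw [zpow_add_one₀ (by norm_num : (2:ℝ) ≠ 0)]; ring
  unfold truncLevel
  by_cases h1 : (2:ℝ) ^ (k+1) ≤ |u x|
  · rw [if_pos h1]
    have ht : (1:ℝ) ≤ |u x| / 2 ^ k - 1 := by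
      rw [le_sub_iff_add_le, le_div_iff₀ h2k]; linarith
    rw [max_eq_left (by linarith), min_eq_left ht]
  · rw [if_neg h1]
    by_cases h2 : |u x| ≤ (2:ℝ) ^ k
    · rw [if_pos h2]
      have ht : |u x| / 2 ^ k - 1 ≤ 0 := by
        rw [sub_nonpos, div_le_one h2k]; exact h2
      rw [max_eq_right ht, min_eq_right (by norm_num)]
    · rw [if_neg h2]
      push_neg at h1 h2
      have ht0 : (0:ℝ) ≤ |u x| / 2 ^ k - 1 := by
        rw [sub_nonneg, le_div_iff₀ h2k]; linarith
      have ht1 : |u x| / 2 ^ k - 1 ≤ 1 := by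
        rw [sub_le_iff_le_add, div_le_iff₀ h2k]; linarith
      rw [max_eq_left ht0, min_eq_right ht1]

lemma clamp_lip (s t : ℝ) : |min 1 (max s 0) - min 1 (max t 0)| ≤ |s - t| := by
  have h1 : |max s 0 - max t 0| ≤ |s - t| := abs_max_sub_max_le_abs s t 0
  have h2 : |min 1 (max s 0) - min 1 (max t 0)| ≤ |max s 0 - max t 0| := by
    rcases le_total (max s 0) (max t 0) with h | h
    · rcases le_total (1:ℝ) (max s 0) with h3 | h3 <;> rcases le_total (1:ℝ) (max t 0) with h4 | h4 <;>
        simp [min_eq_left, min_eq_right, h3, h4] <;> rw [abs_sub_le_iff] <;> constructor <;> linarith [abs_nonneg (max s 0 - max t 0), le_abs_self (max s 0 - max t 0), neg_abs_le (max s 0 - max t 0)]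
    · rcases le_total (1:ℝ) (max s 0) with h3 | h3 <;> rcases le_total (1:ℝ) (max t 0) with h4 | h4 <;>
        simp [min_eq_left, min_eq_right, h3, h4] <;> rw [abs_sub_le_iff] <;> constructor <;> linarith [abs_nonneg (max s 0 - max t 0), le_abs_self (max s 0 - max t 0), neg_abs_le (max s 0 - max t 0)]
  exact h2.trans h1

lemma keyA {X : Type*} (p : ℝ) (hp : 0 < p) (u : X → ℝ) (x y : X) :
    ∑' k : ℤ, ENNReal.ofReal ((2 : ℝ) ^ ((k : ℝ) * p)) *
        ENNReal.ofReal (|truncLevel u k x - truncLevel u k y| ^ p) ≤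
      ENNReal.ofReal ((1 - (2:ℝ) ^ (-p))⁻¹ + 2) * ENNReal.ofReal (|u x - u y| ^ p) := by
  set a := |u x| with ha
  set b := |u y| with hb
  have ha0 : 0 ≤ a := abs_nonneg _
  have hb0 : 0 ≤ b := abs_nonneg _
  set δ : ℝ := |a - b| with hδdef
  have hδ0 : 0 ≤ δ := abs_nonneg _
  have hδle : δ ≤ |u x - u y| := abs_abs_sub_abs_le_abs_sub _ _
  have hΔle : ∀ k : ℤ, |truncLevel u k x - truncLevel u k y| ≤ δ / 2 ^ k := by
    intro k
    rw [truncLevel_eq, truncLevel_eq]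
    refine (clamp_lip _ _).trans ?_
    have h : a / 2^k - 1 - (b / 2^k - 1) = (a - b)/2^k := by ring
    rw [h, abs_div, abs_of_pos (zpow_pos (by norm_num : (0:ℝ)<2) k)]
  have hΔ1 : ∀ k : ℤ, |truncLevel u k x - truncLevel u k y| ≤ 1 := by
    intro k
    rw [truncLevel_eq, truncLevel_eq]
    have b1 : ∀ t : ℝ, 0 ≤ min 1 (max (t / 2^k - 1) 0) ∧ min 1 (max (t/2^k - 1) 0) ≤ 1 :=
      fun t => ⟨le_min (by norm_num) (le_max_right _ _), min_le_left _ _⟩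
    rw [abs_sub_le_iff]
    constructor <;> linarith [(b1 a).1, (b1 a).2, (b1 b).1, (b1 b).2]
  by_cases hδz : δ = 0
  · have hab : a = b := by rw [hδdef] at hδz; rwa [abs_eq_zero, sub_eq_zero] at hδz
    have heq : ∀ k : ℤ, truncLevel u k x = truncLevel u k y := by
      intro k; rw [truncLevel_eq, truncLevel_eq, ← ha, ← hb, hab]
    simp [heq, sub_self, abs_zero, Real.zero_rpow hp.ne']
  · have hδpos : 0 < δ := lt_of_le_of_ne hδ0 (Ne.symm hδz)
    set M := max a b with hM
    have hδM : δ ≤ M := by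
      rw [hδdef, abs_sub_le_iff]
      constructor
      · calc a - b ≤ a := by linarith
          _ ≤ M := le_max_left _ _
      · calc b - a ≤ b := by linarith
          _ ≤ M := le_max_right _ _
    have hMpos : 0 < M := lt_of_lt_of_le hδpos hδM
    set N := Int.log 2 δ with hN
    set L := Int.log 2 M with hLdef
    have hN1 : (2:ℝ)^N ≤ δ := Int.zpow_log_le_self (by norm_num) hδpos
    have hN2 : δ < (2:ℝ)^(N+1) := Int.lt_zpow_succ_log_self (by norm_num) δ
    have hL1 : (2:ℝ)^L ≤ M := Int.zpow_log_le_self (by norm_num) hMpos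
    set c : ℝ≥0∞ := ENNReal.ofReal (δ ^ p) with hc
    have key : ∀ k : ℤ,
        ENNReal.ofReal ((2:ℝ) ^ ((k:ℝ)*p)) *
            ENNReal.ofReal (|truncLevel u k x - truncLevel u k y| ^ p) ≤
          Set.indicator (Iic N) (fun k : ℤ => ENNReal.ofReal ((2:ℝ) ^ ((k:ℝ)*p))) k
            + ((if k = L - 1 then c else 0) + (if k = L then c else 0)) := by
      intro k
      by_cases hk : k ≤ N
      · rw [Set.indicator_of_mem (Set.mem_Iic.mpr hk)]
        refine le_trans ?_ le_self_add
        calc ENNReal.ofReal ((2:ℝ) ^ ((k:ℝ)*p)) *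
                ENNReal.ofReal (|truncLevel u k x - truncLevel u k y| ^ p)
            ≤ ENNReal.ofReal ((2:ℝ)^((k:ℝ)*p)) * 1 := by
              gcongr
              exact ENNReal.ofReal_le_one.mpr (Real.rpow_le_one (abs_nonneg _) (hΔ1 k) hp.le)
          _ = ENNReal.ofReal ((2:ℝ)^((k:ℝ)*p)) := mul_one _
      · push_neg at hk
        by_cases hΔz : truncLevel u k x - truncLevel u k y = 0
        · rw [hΔz]; simp [Real.zero_rpow hp.ne']
        · have h2kpos : (0:ℝ) < 2^k := zpow_pos (by norm_num) k
          have h2succ : (2:ℝ)^(k+1) = 2 * 2^k := by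
            rw [zpow_add_one₀ (by norm_num : (2:ℝ)≠0)]; ring
          have hkM : (2:ℝ)^k < M := by
            by_contra h
            push_neg at h
            apply hΔz
            have hx0 : truncLevel u k x = 0 := by
              rw [truncLevel_eq]
              have h1 : a / 2^k - 1 ≤ 0 := by
                rw [sub_nonpos, div_le_one h2kpos]
                exact le_trans (le_max_left _ _) h
              rw [max_eq_right h1, min_eq_right (by norm_num)]
            have hy0 : truncLevel u k y = 0 := by
              rw [truncLevel_eq]
              have h1 : b / 2^k - 1 ≤ 0 := by
                rw [sub_nonpos, div_le_one h2kpos]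
                exact le_trans (le_max_right _ _) h
              rw [max_eq_right h1, min_eq_right (by norm_num)]
            rw [hx0, hy0, sub_self]
          have hmk : min a b < (2:ℝ)^(k+1) := by
            by_contra h
            push_neg at h
            apply hΔz
            have hx1 : truncLevel u k x = 1 := by
              rw [truncLevel_eq]
              have h1 : (1:ℝ) ≤ a / 2^k - 1 := by
                rw [le_sub_iff_add_le, le_div_iff₀ h2kpos]
                have := le_trans h (min_le_left a b)
                linarith
              rw [max_eq_left (by linarith), min_eq_left h1]
            have hy1 : truncLevel u k y = 1 := by
              rw [truncLevel_eq]
              have h1 : (1:ℝ) ≤ b / 2^k - 1 := by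
                rw [le_sub_iff_add_le, le_div_iff₀ h2kpos]
                have := le_trans h (min_le_right a b)
                linarith
              rw [max_eq_left (by linarith), min_eq_left h1]
            rw [hx1, hy1, sub_self]
          have hδk : δ < (2:ℝ)^k :=
            lt_of_lt_of_le hN2 (zpow_le_zpow_right₀ (by norm_num) (by omega))
          have hkL : k ≤ L := by
            by_contra h
            push_neg at h
            have h1 : (2:ℝ)^(L+1) ≤ 2^k := zpow_le_zpow_right₀ (by norm_num) (by omega)
            have h2 : M < (2:ℝ)^(L+1) := Int.lt_zpow_succ_log_self (by norm_num) M
            linarith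
          have hLk : L ≤ k + 1 := by
            by_contra h
            push_neg at h
            have h1 : (2:ℝ)^(k+2) ≤ 2^L := zpow_le_zpow_right₀ (by norm_num) (by omega)
            have hmm : M - min a b = δ := by
              rcases le_total a b with h' | h'
              · rw [hM, hδdef, max_eq_right h', min_eq_left h', abs_of_nonpos (by linarith)]
                ring
              · rw [hM, hδdef, max_eq_left h', min_eq_right h', abs_of_nonneg (by linarith)]
            have h2 : (2:ℝ)^(k+2) = 2 * (2 * 2^k) := by
              rw [show k+2 = (k+1)+1 by ring, zpow_add_one₀ (by norm_num : (2:ℝ)≠0), h2succ]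
              ring
            linarith
          have hterm : ENNReal.ofReal ((2:ℝ)^((k:ℝ)*p)) *
              ENNReal.ofReal (|truncLevel u k x - truncLevel u k y| ^ p) ≤ c := by
            rw [← ENNReal.ofReal_mul (Real.rpow_nonneg (by norm_num) _)]
            apply ENNReal.ofReal_le_ofReal
            have h1 : |truncLevel u k x - truncLevel u k y| ^ p ≤ (δ / 2^k) ^ p :=
              Real.rpow_le_rpow (abs_nonneg _) (hΔle k) hp.le
            have h2 : (2:ℝ)^((k:ℝ)*p) = ((2:ℝ)^k)^p := by
              rw [Real.rpow_mul (by norm_num), Real.rpow_intCast]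
            calc (2:ℝ)^((k:ℝ)*p) * |truncLevel u k x - truncLevel u k y| ^ p
                ≤ (2:ℝ)^((k:ℝ)*p) * (δ / 2^k)^p :=
                  mul_le_mul_of_nonneg_left h1 (Real.rpow_nonneg (by norm_num) _)
              _ = δ ^ p := by
                  rw [h2, Real.div_rpow hδ0 h2kpos.le, mul_div_cancel₀]
                  exact (Real.rpow_pos_of_pos h2kpos p).ne'
          have hcle : c ≤ (if k = L - 1 then c else 0) + (if k = L then c else 0) := by
            rcases (by omega : k = L - 1 ∨ k = L) with hk' | hk'
            · rw [if_pos hk']; exact le_self_add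
            · rw [if_pos hk']; exact le_add_self
          exact le_trans hterm (le_trans hcle le_add_self)
    have hIic : ∑' k : ℤ, Set.indicator (Iic N)
          (fun k : ℤ => ENNReal.ofReal ((2:ℝ)^((k:ℝ)*p))) k
        ≤ ENNReal.ofReal (δ^p) * ENNReal.ofReal ((1 - (2:ℝ)^(-p))⁻¹) := by
      let e : ℕ ≃ (Iic N : Set ℤ) :=
        { toFun := fun j => ⟨N - j, by simp only [Set.mem_Iic]; omega⟩
          invFun := fun k => (N - k.1).toNat
          left_inv := fun j => by simp
          right_inv := fun k => by
            rcases k with ⟨k, hk⟩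
            simp only [Set.mem_Iic] at hk
            apply Subtype.ext
            simp only
            omega }
      rw [← tsum_subtype, ← Equiv.tsum_eq e]
      simp only [e, Equiv.coe_fn_mk]
      have hrw : ∀ j : ℕ, ENNReal.ofReal ((2:ℝ) ^ ((((N - j : ℤ)):ℝ) * p)) =
          ENNReal.ofReal ((2:ℝ)^((N:ℝ)*p)) * (ENNReal.ofReal ((2:ℝ)^(-p)))^j := by
        intro j
        rw [← ENNReal.ofReal_pow (Real.rpow_nonneg (by norm_num) _),
          ← ENNReal.ofReal_mul (Real.rpow_nonneg (by norm_num) _)]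
        congr 1
        rw [← Real.rpow_natCast ((2:ℝ)^(-p)) j, ← Real.rpow_mul (by norm_num),
          ← Real.rpow_add (by norm_num)]
        congr 1
        push_cast
        ring
      simp only [hrw]
      rw [ENNReal.tsum_mul_left, ENNReal.tsum_geometric]
      have hr1 : (2:ℝ)^(-p) < 1 :=
        Real.rpow_lt_one_of_one_lt_of_neg (by norm_num) (by linarith)
      have hr0 : (0:ℝ) ≤ (2:ℝ)^(-p) := Real.rpow_nonneg (by norm_num) _
      have hone : (1 : ℝ≥0∞) - ENNReal.ofReal ((2:ℝ)^(-p)) = ENNReal.ofReal (1 - (2:ℝ)^(-p)) := by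
        rw [ENNReal.ofReal_sub _ hr0, ENNReal.ofReal_one]
      rw [hone, ← ENNReal.ofReal_inv_of_pos (by linarith)]
      refine mul_le_mul_left ?_ _
      apply ENNReal.ofReal_le_ofReal
      have h2 : (2:ℝ)^((N:ℝ)*p) = ((2:ℝ)^N)^p := by
        rw [Real.rpow_mul (by norm_num), Real.rpow_intCast]
      rw [h2]
      exact Real.rpow_le_rpow (zpow_pos (by norm_num : (0:ℝ)<2) N).le hN1 hp.le
    calc ∑' k : ℤ, ENNReal.ofReal ((2:ℝ) ^ ((k:ℝ)*p)) *
            ENNReal.ofReal (|truncLevel u k x - truncLevel u k y| ^ p)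
        ≤ ∑' k : ℤ, (Set.indicator (Iic N) (fun k : ℤ => ENNReal.ofReal ((2:ℝ) ^ ((k:ℝ)*p))) k
            + ((if k = L - 1 then c else 0) + (if k = L then c else 0))) :=
          ENNReal.tsum_le_tsum key
      _ = (∑' k : ℤ, Set.indicator (Iic N) (fun k : ℤ => ENNReal.ofReal ((2:ℝ) ^ ((k:ℝ)*p))) k)
            + ((∑' k : ℤ, if k = L - 1 then c else 0) + (∑' k : ℤ, if k = L then c else 0)) := by
          rw [ENNReal.tsum_add, ENNReal.tsum_add]
      _ = (∑' k : ℤ, Set.indicator (Iic N) (fun k : ℤ => ENNReal.ofReal ((2:ℝ) ^ ((k:ℝ)*p))) k)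
            + (c + c) := by rw [tsum_ite_eq, tsum_ite_eq]
      _ ≤ ENNReal.ofReal (δ^p) * ENNReal.ofReal ((1 - (2:ℝ)^(-p))⁻¹) + (c + c) := by gcongr
      _ = ENNReal.ofReal (δ^p) * (ENNReal.ofReal ((1 - (2:ℝ)^(-p))⁻¹) + 2) := by
          rw [hc]
          ring
      _ ≤ ENNReal.ofReal (|u x - u y|^p) * (ENNReal.ofReal ((1 - (2:ℝ)^(-p))⁻¹) + 2) := by
          have := ENNReal.ofReal_le_ofReal (Real.rpow_le_rpow hδ0 hδle hp.le)
          exact mul_le_mul_left this _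
      _ = ENNReal.ofReal ((1 - (2:ℝ) ^ (-p))⁻¹ + 2) * ENNReal.ofReal (|u x - u y| ^ p) := by
          have hr1 : (2:ℝ)^(-p) < 1 :=
            Real.rpow_lt_one_of_one_lt_of_neg (by norm_num) (by linarith)
          rw [ENNReal.ofReal_add (inv_nonneg.mpr (by linarith)) (by norm_num),
            ENNReal.ofReal_ofNat, mul_comm]

lemma my_lintegral_const_mul_le {α : Type*} [MeasurableSpace α] (μ : Measure α)
    (c : ℝ≥0∞) (hc0 : c ≠ 0) (hc : c ≠ ∞) (f : α → ℝ≥0∞) :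
    ∫⁻ a, c * f a ∂μ ≤ c * ∫⁻ a, f a ∂μ := by
  have h := lintegral_const_mul_le (μ := μ) c⁻¹ (fun a => c * f a)
  have h2 : ∫⁻ a, c⁻¹ * (c * f a) ∂μ = ∫⁻ a, f a ∂μ := by
    apply lintegral_congr; intro a
    rw [← mul_assoc, ENNReal.inv_mul_cancel hc0 hc, one_mul]
  calc ∫⁻ a, c * f a ∂μ = c * (c⁻¹ * ∫⁻ a, c * f a ∂μ) := by
        rw [← mul_assoc, ENNReal.mul_inv_cancel hc0 hc, one_mul]
    _ ≤ c * ∫⁻ a, c⁻¹ * (c * f a) ∂μ := mul_le_mul_right h _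
    _ = c * ∫⁻ a, f a ∂μ := by rw [h2]

lemma my_tsum_lintegral_le {α ι : Type*} [MeasurableSpace α] (μ : Measure α)
    (f : ι → α → ℝ≥0∞) :
    ∑' i, ∫⁻ a, f i a ∂μ ≤ ∫⁻ a, ∑' i, f i a ∂μ := by
  rw [ENNReal.tsum_eq_iSup_sum]
  refine iSup_le fun F => ?_
  classical
  have h : ∑ i ∈ F, ∫⁻ a, f i a ∂μ ≤ ∫⁻ a, ∑ i ∈ F, f i a ∂μ := by
    induction F using Finset.induction with
    | empty => simp
    | insert i F' hx ih =>
      rw [Finset.sum_insert hx]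
      refine le_trans (add_le_add_right ih _) ?_
      refine le_trans (le_lintegral_add _ _) ?_
      apply lintegral_mono
      intro a
      simp [Finset.sum_insert hx]
  exact h.trans (lintegral_mono fun a => ENNReal.sum_le_tsum F)


/-- Fractional Maz'ya truncation estimate: the weighted sum over `k ∈ ℤ` of the Gagliardo
energies of the truncations `u_k` is controlled by the Gagliardo energy of `u`, with a
constant depending only on `p`. -/
theorem mazya_truncation {X : Type*} [MetricSpace X] [MeasurableSpace X] [BorelSpace X]
    [Nontrivial X]
    (μ : Measure X) (c_μ : ℝ) (hc : 1 < c_μ)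
    (hball : ∀ (x : X) (ρ : ℝ), 0 < ρ → 0 < μ (ball x ρ) ∧ μ (ball x ρ) < ⊤)
    (hdoubling : ∀ (x : X) (ρ : ℝ), 0 < ρ →
      μ (ball x (2 * ρ)) ≤ ENNReal.ofReal c_μ * μ (ball x ρ))
    (p s : ℝ) (hp : 1 ≤ p) (hs0 : 0 < s) (hs1 : s < 1)
    (u : X → ℝ) (hu : ∃ L : ℝ≥0, LipschitzWith L u) :
    ∃ C : ℝ, 0 < C ∧
      ∀ (z : X) (R : ℝ), 0 < R →
        (∑' k : ℤ, ENNReal.ofReal ((2 : ℝ) ^ ((k : ℝ) * p)) *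
            ∫⁻ x in ball z R, ∫⁻ y in ball z R, fracKernel μ s p (truncLevel u k) x y ∂μ ∂μ) ≤
          ENNReal.ofReal C *
            ∫⁻ x in ball z R, ∫⁻ y in ball z R, fracKernel μ s p u x y ∂μ ∂μ := by
  have hp0 : 0 < p := lt_of_lt_of_le one_pos hp
  have hr1 : (2:ℝ)^(-p) < 1 :=
    Real.rpow_lt_one_of_one_lt_of_neg (by norm_num) (by linarith)
  set C : ℝ := (1 - (2:ℝ)^(-p))⁻¹ + 2 with hCdef
  have hinv : 0 < (1 - (2:ℝ)^(-p))⁻¹ := inv_pos.mpr (by linarith)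
  have hCpos : 0 < C := by rw [hCdef]; linarith
  refine ⟨C, hCpos, ?_⟩
  intro z R hR
  have hC0 : ENNReal.ofReal C ≠ 0 := by
    rw [Ne, ENNReal.ofReal_eq_zero]; linarith
  have hCtop : ENNReal.ofReal C ≠ ∞ := ENNReal.ofReal_ne_top
  have hpt : ∀ x y : X,
      (∑' k : ℤ, ENNReal.ofReal ((2:ℝ)^((k:ℝ)*p)) * fracKernel μ s p (truncLevel u k) x y)
        ≤ ENNReal.ofReal C * fracKernel μ s p u x y := by
    intro x y
    set D := ENNReal.ofReal (dist x y ^ (s*p)) * μ (ball x (dist x y)) with hD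
    have h1 : ∀ k : ℤ, ENNReal.ofReal ((2:ℝ)^((k:ℝ)*p)) * fracKernel μ s p (truncLevel u k) x y
        = (ENNReal.ofReal ((2:ℝ)^((k:ℝ)*p)) *
            ENNReal.ofReal (|truncLevel u k x - truncLevel u k y| ^ p)) * D⁻¹ := by
      intro k
      rw [fracKernel, div_eq_mul_inv, ← mul_assoc, ← hD]
    simp only [h1]
    rw [ENNReal.tsum_mul_right]
    calc (∑' k : ℤ, ENNReal.ofReal ((2:ℝ)^((k:ℝ)*p)) *
            ENNReal.ofReal (|truncLevel u k x - truncLevel u k y| ^ p)) * D⁻¹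
        ≤ (ENNReal.ofReal C * ENNReal.ofReal (|u x - u y| ^ p)) * D⁻¹ :=
          mul_le_mul_left (keyA p hp0 u x y) _
      _ = ENNReal.ofReal C * fracKernel μ s p u x y := by
          rw [fracKernel, div_eq_mul_inv, ← hD, mul_assoc]
  calc ∑' k : ℤ, ENNReal.ofReal ((2 : ℝ) ^ ((k : ℝ) * p)) *
        ∫⁻ x in ball z R, ∫⁻ y in ball z R, fracKernel μ s p (truncLevel u k) x y ∂μ ∂μ
      ≤ ∑' k : ℤ, ∫⁻ x in ball z R, ENNReal.ofReal ((2 : ℝ) ^ ((k : ℝ) * p)) *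
          ∫⁻ y in ball z R, fracKernel μ s p (truncLevel u k) x y ∂μ ∂μ :=
        ENNReal.tsum_le_tsum fun k => lintegral_const_mul_le _ _
    _ ≤ ∫⁻ x in ball z R, ∑' k : ℤ, ENNReal.ofReal ((2 : ℝ) ^ ((k : ℝ) * p)) *
          ∫⁻ y in ball z R, fracKernel μ s p (truncLevel u k) x y ∂μ ∂μ :=
        my_tsum_lintegral_le _ _
    _ ≤ ∫⁻ x in ball z R, ∫⁻ y in ball z R,
          ∑' k : ℤ, ENNReal.ofReal ((2 : ℝ) ^ ((k : ℝ) * p)) *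
            fracKernel μ s p (truncLevel u k) x y ∂μ ∂μ := by
        apply lintegral_mono
        intro x
        calc ∑' k : ℤ, ENNReal.ofReal ((2 : ℝ) ^ ((k : ℝ) * p)) *
              ∫⁻ y in ball z R, fracKernel μ s p (truncLevel u k) x y ∂μ
            ≤ ∑' k : ℤ, ∫⁻ y in ball z R, ENNReal.ofReal ((2 : ℝ) ^ ((k : ℝ) * p)) *
                fracKernel μ s p (truncLevel u k) x y ∂μ :=
              ENNReal.tsum_le_tsum fun k => lintegral_const_mul_le _ _
          _ ≤ _ := my_tsum_lintegral_le _ _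
    _ ≤ ∫⁻ x in ball z R, ∫⁻ y in ball z R,
          ENNReal.ofReal C * fracKernel μ s p u x y ∂μ ∂μ :=
        lintegral_mono fun x => lintegral_mono fun y => hpt x y
    _ ≤ ∫⁻ x in ball z R, ENNReal.ofReal C *
          ∫⁻ y in ball z R, fracKernel μ s p u x y ∂μ ∂μ :=
        lintegral_mono fun x => my_lintegral_const_mul_le _ _ hC0 hCtop _
    _ ≤ ENNReal.ofReal C *
          ∫⁻ x in ball z R, ∫⁻ y in ball z R, fracKernel μ s p u x y ∂μ ∂μ :=
        my_lintegral_const_mul_le _ _ hC0 hCtop _
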